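/- For the zero-cost-symbol case: if k(⋆) = 0 and k(x) > 0 for x ≠ ⋆, then max over input distributions P with E_P[k] > 0 of [I(P,Q) + D(P_Y∥Q(·|⋆))]/((1+β)E_P[k]) equals (1/(1+β)) · max_{x ≠ ⋆} D(Q(·|x)∥Q(·|⋆))/k(x). -/

import Mathlib

open Finset

/-- Zero-cost-symbol case: the maximum over input distributions `P` with
positive expected cost of `(I(P,Q) + D(P_Y ∥ Q(·|⋆))) / ((1+β) E_P[k])` equals
`(1/(1+β)) max_{x ≠ ⋆} D(Q(·|x) ∥ Q(·|⋆)) / k(x)`. -/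
theorem zero_cost_capacity_formula
    {X Y : Type*} [Fintype X] [Fintype Y] [DecidableEq X]
    (Q : X → Y → ℝ) (star : X)
    (hQ0 : ∀ x y, 0 ≤ Q x y) (hQ1 : ∀ x, ∑ y, Q x y = 1)
    (hstar : ∀ y, 0 < Q star y)
    (k : X → ℝ) (hkstar : k star = 0) (hkpos : ∀ x, x ≠ star → 0 < k x)
    (β : ℝ) (hβ : 0 ≤ β)
    (hne : (Finset.univ.filter (fun x => x ≠ star)).Nonempty) :
    IsGreatest
      {r : ℝ | ∃ P : X → ℝ, (∀ x, 0 ≤ P x) ∧ (∑ x, P x = 1) ∧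
        0 < ∑ x, P x * k x ∧
        r = ((∑ x, ∑ y, P x * Q x y *
              Real.logb 2 (P x * Q x y / (P x * (∑ x', P x' * Q x' y)))) +
            (∑ y, (∑ x', P x' * Q x' y) *
              Real.logb 2 ((∑ x', P x' * Q x' y) / Q star y))) /
          ((1 + β) * ∑ x, P x * k x)}
      ((1 / (1 + β)) *
        (Finset.univ.filter (fun x => x ≠ star)).sup' hne
          (fun x => (∑ y, Q x y * Real.logb 2 (Q x y / Q star y)) / k x)) := by
  have h1β : (0:ℝ) < 1 + β := by linarith
  set f : X → ℝ := fun x => ∑ y, Q x y * Real.logb 2 (Q x y / Q star y) with hf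
  set M : ℝ := (Finset.univ.filter (fun x => x ≠ star)).sup' hne (fun x => f x / k x) with hM
  -- key identity: numerator = ∑ x, P x * f x
  have key : ∀ P : X → ℝ, (∀ x, 0 ≤ P x) →
      ((∑ x, ∑ y, P x * Q x y *
            Real.logb 2 (P x * Q x y / (P x * (∑ x', P x' * Q x' y)))) +
        (∑ y, (∑ x', P x' * Q x' y) *
            Real.logb 2 ((∑ x', P x' * Q x' y) / Q star y)))
      = ∑ x, P x * f x := by
    intro P hP
    have h2 : (∑ y, (∑ x', P x' * Q x' y) *
          Real.logb 2 ((∑ x', P x' * Q x' y) / Q star y))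
        = ∑ x, ∑ y, P x * Q x y *
            Real.logb 2 ((∑ x', P x' * Q x' y) / Q star y) := by
      rw [Finset.sum_comm]
      refine Finset.sum_congr rfl fun y _ => ?_
      rw [Finset.sum_mul]
    rw [h2, ← Finset.sum_add_distrib]
    refine Finset.sum_congr rfl fun x _ => ?_
    rw [← Finset.sum_add_distrib, Finset.mul_sum]
    refine Finset.sum_congr rfl fun y _ => ?_
    set PY : ℝ := ∑ x', P x' * Q x' y with hPY
    rcases eq_or_lt_of_le (hP x) with hPx | hPx
    · simp [← hPx]
    rcases eq_or_lt_of_le (hQ0 x y) with hQxy | hQxy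
    · simp [← hQxy]
    have hPYpos : 0 < PY := by
      have : P x * Q x y ≤ PY := by
        refine Finset.single_le_sum (f := fun x' => P x' * Q x' y)
          (fun x' _ => mul_nonneg (hP x') (hQ0 x' y)) (Finset.mem_univ x)
      nlinarith
    have h3 : P x * Q x y / (P x * PY) = Q x y / PY := by
      rw [mul_div_mul_left _ _ (ne_of_gt hPx)]
    have hmul : Q x y / PY * (PY / Q star y) = Q x y / Q star y := by
      field_simp
    rw [h3, ← mul_add, ← Real.logb_mul (ne_of_gt (div_pos hQxy hPYpos))
      (ne_of_gt (div_pos hPYpos (hstar y))), hmul]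
    ring
  have hout : ∀ x, f x ≤ M * k x := by
    intro x
    by_cases hx : x = star
    · have hfs : f star = 0 := by
        simp [hf, div_self (ne_of_gt (hstar _))]
      rw [hx, hfs, hkstar, mul_zero]
    · have hmem : x ∈ Finset.univ.filter (fun x => x ≠ star) := by
        simp [hx]
      have := Finset.le_sup' (fun x => f x / k x) hmem
      rw [div_le_iff₀ (hkpos x hx)] at this
      linarith
  constructor
  · -- membership: maximizer exists, use point mass
    obtain ⟨x0, hx0mem, hx0⟩ := Finset.exists_mem_eq_sup' hne (fun x => f x / k x)
    have hx0ne : x0 ≠ star := by simpa using hx0mem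
    refine ⟨fun x => if x = x0 then 1 else 0, fun x => by positivity, by simp, ?_, ?_⟩
    · have : ∑ x, (if x = x0 then (1:ℝ) else 0) * k x = k x0 := by
        rw [Finset.sum_eq_single x0] <;> simp_all
      rw [this]; exact hkpos x0 hx0ne
    · rw [key _ (fun x => by positivity)]
      have h4 : ∑ x, (if x = x0 then (1:ℝ) else 0) * f x = f x0 := by
        rw [Finset.sum_eq_single x0] <;> simp_all
      have h5 : ∑ x, (if x = x0 then (1:ℝ) else 0) * k x = k x0 := by
        rw [Finset.sum_eq_single x0] <;> simp_all
      rw [h4, h5, hM, hx0]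
      have hk0 : k x0 ≠ 0 := ne_of_gt (hkpos x0 hx0ne)
      field_simp
  · -- upper bound
    rintro r ⟨P, hP, hPsum, hPk, rfl⟩
    rw [key P hP]
    have hnum : ∑ x, P x * f x ≤ M * ∑ x, P x * k x := by
      rw [Finset.mul_sum]
      refine Finset.sum_le_sum fun x _ => ?_
      have := hout x
      calc P x * f x ≤ P x * (M * k x) := by
            exact mul_le_mul_of_nonneg_left this (hP x)
        _ = M * (P x * k x) := by ring
    rw [div_le_iff₀ (by positivity)]
    calc ∑ x, P x * f x ≤ M * ∑ x, P x * k x := hnum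
      _ = 1 / (1 + β) * M * ((1 + β) * ∑ x, P x * k x) := by
          field_simp
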